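/- arXiv:1407.7222 — 4 statements merged into one kernel-verified Lean document; each statement's English description precedes it below -/
import Mathlib

section
/- Let H be a real Hilbert space, V a real Banach space, and j : V → H an injective continuous linear map with dense range. Let A : V → V* satisfy the coercivity condition: there exist r > 0, c₁, c₃ ∈ ℝ, c₂ > 0 with 2⟨A(v), v⟩ ≤ c₁ − c₂·‖v‖_V^{r+1} + c₃·|j v|² for all v ∈ V. Fix λ ∈ ℝ with λ ≥ c₃/2, a point x ∈ H, and n ≥ 1. Suppose xₙ ∈ V and hₙ ∈ H satisfy ⟨A(xₙ), v⟩ = ⟪hₙ, j v⟫ for all v ∈ V and the resolvent equation j xₙ + (1/n)·(λ·j xₙ − hₙ) = x in H. Then |j xₙ|² + (c₂/(2n))·‖xₙ‖_V^{r+1} ≤ |x|·|j xₙ| + c₁/(2n). -/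
open scoped RealInnerProductSpace

/-- The a priori resolvent bound (bound_x_n) in the proof of Lemma 2.4:
pairing the resolvent equation for `Ã = λ I − A` with `xₙ` and using coercivity. -/
theorem resolvent_apriori_bound
    {H V : Type*}
    [NormedAddCommGroup H] [InnerProductSpace ℝ H] [CompleteSpace H]
    [NormedAddCommGroup V] [NormedSpace ℝ V] [CompleteSpace V]
    (j : V →L[ℝ] H) (hj_inj : Function.Injective j) (hj_dense : DenseRange j)
    (A : V → StrongDual ℝ V)
    (r c₁ c₂ c₃ : ℝ) (hr : 0 < r) (hc₂ : 0 < c₂)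
    (hcoer : ∀ v : V, 2 * A v v ≤ c₁ - c₂ * ‖v‖ ^ (r + 1) + c₃ * ‖j v‖ ^ 2)
    (lam : ℝ) (hlam : c₃ / 2 ≤ lam)
    (x : H) (n : ℕ) (hn : 1 ≤ n) (xₙ : V) (hₙ : H)
    (hrep : ∀ v : V, A xₙ v = ⟪hₙ, j v⟫)
    (hres : j xₙ + (1 / (n : ℝ)) • (lam • j xₙ - hₙ) = x) :
    ‖j xₙ‖ ^ 2 + (c₂ / (2 * n)) * ‖xₙ‖ ^ (r + 1) ≤ ‖x‖ * ‖j xₙ‖ + c₁ / (2 * n) := by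
  have hnpos : (0 : ℝ) < n := by exact_mod_cast hn
  have h1 : ⟪x, j xₙ⟫ =
      ‖j xₙ‖ ^ 2 + (1 / (n : ℝ)) * (lam * ‖j xₙ‖ ^ 2 - A xₙ xₙ) := by
    rw [← hres, hrep]
    simp [inner_add_left, inner_smul_left, inner_sub_left,
      real_inner_self_eq_norm_sq]
  have h2 : 2 * A xₙ xₙ ≤ c₁ - c₂ * ‖xₙ‖ ^ (r + 1) + c₃ * ‖j xₙ‖ ^ 2 := hcoer xₙ
  have hsq : (0 : ℝ) ≤ ‖j xₙ‖ ^ 2 := sq_nonneg _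
  have h3 : (c₂ / 2) * ‖xₙ‖ ^ (r + 1) - c₁ / 2 ≤ lam * ‖j xₙ‖ ^ 2 - A xₙ xₙ := by
    nlinarith [mul_le_mul_of_nonneg_right hlam hsq]
  have h4 : ⟪x, j xₙ⟫ ≤ ‖x‖ * ‖j xₙ‖ := real_inner_le_norm x (j xₙ)
  have h5 : ‖j xₙ‖ ^ 2 + (1 / (n : ℝ)) * ((c₂ / 2) * ‖xₙ‖ ^ (r + 1) - c₁ / 2)
      ≤ ‖x‖ * ‖j xₙ‖ := by
    calc ‖j xₙ‖ ^ 2 + (1 / (n : ℝ)) * ((c₂ / 2) * ‖xₙ‖ ^ (r + 1) - c₁ / 2)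
        ≤ ‖j xₙ‖ ^ 2 + (1 / (n : ℝ)) * (lam * ‖j xₙ‖ ^ 2 - A xₙ xₙ) := by
          gcongr
      _ = ⟪x, j xₙ⟫ := h1.symm
      _ ≤ ‖x‖ * ‖j xₙ‖ := h4
  have : (1 / (n : ℝ)) * ((c₂ / 2) * ‖xₙ‖ ^ (r + 1) - c₁ / 2)
      = (c₂ / (2 * n)) * ‖xₙ‖ ^ (r + 1) - c₁ / (2 * n) := by
    ring
  linarith [h5, this ▸ h5]
end

section
/- For every real number t > 0, |1 − t| ≤ t·log(t) + 2·min(|log t|, 1). -/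
/-- Pointwise inequality `|1 − t| ≤ t log t + 2(|log t| ∧ 1)` for `t > 0`, used in
the proofs of Lemmas 2.1 and 2.2 to bound `|1 − R|` by entropy quantities. -/
theorem abs_one_sub_le_entropy (t : ℝ) (ht : 0 < t) :
    |1 - t| ≤ t * Real.log t + 2 * min |Real.log t| 1 := by
  have hkey : t - 1 ≤ t * Real.log t := by
    have h1 : Real.log (1 / t) ≤ 1 / t - 1 := Real.log_le_sub_one_of_pos (by positivity)
    rw [Real.log_div one_ne_zero (ne_of_gt ht), Real.log_one] at h1
    have ht' : t * (1 / t) = 1 := by field_simp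
    nlinarith [ht.le]
  have hlog : Real.log t ≤ t - 1 := Real.log_le_sub_one_of_pos ht
  rcases le_or_gt 1 t with h1 | h1
  · have hl0 : 0 ≤ Real.log t := Real.log_nonneg h1
    have : (0:ℝ) ≤ min |Real.log t| 1 := le_min (abs_nonneg _) zero_le_one
    rw [abs_of_nonpos (by linarith)]
    linarith
  · have hl0 : Real.log t ≤ 0 := Real.log_nonpos ht.le h1.le
    rw [abs_of_nonneg (by linarith), abs_of_nonpos hl0]
    rcases le_total (-Real.log t) 1 with h2 | h2
    · rw [min_eq_left h2]
      nlinarith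
    · rw [min_eq_right h2]
      linarith
end

section
/- Let (Ω, F, P) be a probability space and R : Ω → ℝ a measurable function with R > 0 almost surely, such that R, R·log R and log R are all integrable. Then E|1 − R| ≤ E[R·log R] + 2·E|log R|. -/
open MeasureTheory

lemma abs_one_sub_le_key {t : ℝ} (ht : 0 < t) :
    |1 - t| ≤ t * Real.log t + 2 * |Real.log t| := by
  rcases le_or_gt 1 t with h | h
  · have hlog0 : 0 ≤ Real.log t := Real.log_nonneg h
    rw [abs_of_nonpos (by linarith), abs_of_nonneg hlog0]
    have h1 : Real.log (1 / t) ≤ 1 / t - 1 :=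
      Real.log_le_sub_one_of_pos (by positivity)
    rw [Real.log_div one_ne_zero (ne_of_gt ht), Real.log_one] at h1
    have h2 : t * Real.log t ≥ t - 1 := by
      have := mul_le_mul_of_nonneg_left h1 (le_of_lt ht)
      have ht' : t * (1 / t - 1) = 1 - t := by field_simp
      nlinarith
    linarith
  · have hlog0 : Real.log t ≤ 0 := Real.log_nonpos (le_of_lt ht) h.le
    rw [abs_of_nonneg (by linarith), abs_of_nonpos hlog0]
    have h1 : Real.log t ≤ t - 1 := Real.log_le_sub_one_of_pos ht
    nlinarith

/-- The entropy estimate `E|1 − R| ≤ E[R log R] + 2 E|log R|` used in Lemmas 2.1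
and 2.2 to control `E|1 − R_T|` for the Girsanov density `R_T`. -/
theorem expectation_abs_one_sub_le_entropy
    {Ω : Type*} [MeasurableSpace Ω] (P : Measure Ω) [IsProbabilityMeasure P]
    (R : Ω → ℝ) (hR : Measurable R) (hpos : ∀ᵐ ω ∂P, 0 < R ω)
    (hint : Integrable R P)
    (hent : Integrable (fun ω => R ω * Real.log (R ω)) P)
    (hlog : Integrable (fun ω => Real.log (R ω)) P) :
    ∫ ω, |1 - R ω| ∂P ≤
      (∫ ω, R ω * Real.log (R ω) ∂P) + 2 * ∫ ω, |Real.log (R ω)| ∂P := by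
  have habs : Integrable (fun ω => |1 - R ω|) P :=
    ((integrable_const 1).sub hint).abs
  have hlogabs : Integrable (fun ω => |Real.log (R ω)|) P := hlog.abs
  have hle : ∫ ω, |1 - R ω| ∂P ≤
      ∫ ω, (R ω * Real.log (R ω) + 2 * |Real.log (R ω)|) ∂P := by
    refine integral_mono_ae habs (hent.add (hlogabs.const_mul 2)) ?_
    filter_upwards [hpos] with ω hω
    exact abs_one_sub_le_key hω
  calc ∫ ω, |1 - R ω| ∂P
      ≤ ∫ ω, (R ω * Real.log (R ω) + 2 * |Real.log (R ω)|) ∂P := hle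
    _ = (∫ ω, R ω * Real.log (R ω) ∂P) + 2 * ∫ ω, |Real.log (R ω)| ∂P := by
        rw [integral_add hent (hlogabs.const_mul 2), MeasureTheory.integral_const_mul]
end

section
/- Let H be a real Hilbert space, V a real Banach space, and j : V → H an injective continuous linear map with dense range and operator norm M. Let A : V → V* satisfy, for some r > 0, c₁, c₃ ∈ ℝ, c₂ > 0, c₄ ∈ ℝ, c₅ ≥ 0: (coercivity) 2⟨A(v), v⟩ ≤ c₁ − c₂·‖v‖_V^{r+1} + c₃·|j v|² for all v ∈ V, and (growth) |⟨A(u), v⟩| ≤ c₄ + c₅·(‖u‖_V^r + ‖v‖_V^{r+1} + |j u|² + |j v|²) for all u, v ∈ V. Fix λ ≥ max(c₃/2, 0) and x ∈ H, and suppose that for every n ≥ 1 there are xₙ ∈ V and hₙ ∈ H with ⟨A(xₙ), v⟩ = ⟪hₙ, j v⟫ for all v ∈ V and j xₙ + (1/n)·(λ·j xₙ − hₙ) = x in H. Then sup_n |j xₙ| < ∞, and sup_{v ∈ V, ‖v‖_V ≤ 1} |⟪x − j xₙ, j v⟫| → 0 as n → ∞; that is, j xₙ converges to x in the dual norm of V*.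 -/
open scoped RealInnerProductSpace
open Filter

set_option maxHeartbeats 1600000 in
/-- Combination of the estimates (bound_x_n) and (x_x_n) in the proof of
Lemma 2.4: the resolvent approximants `xₙ` of `x` are bounded in `H` and
converge to `x` in the dual norm of `V*` (i.e. when tested uniformly against
the unit ball of `V`). -/
theorem resolvent_approximants_bounded_and_converge
    {H V : Type*}
    [NormedAddCommGroup H] [InnerProductSpace ℝ H] [CompleteSpace H]
    [NormedAddCommGroup V] [NormedSpace ℝ V] [CompleteSpace V]
    (j : V →L[ℝ] H) (hj_inj : Function.Injective j) (hj_dense : DenseRange j)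
    (A : V → StrongDual ℝ V)
    (r c₁ c₂ c₃ : ℝ) (hr : 0 < r) (hc₂ : 0 < c₂)
    (hcoer : ∀ v : V, 2 * A v v ≤ c₁ - c₂ * ‖v‖ ^ (r + 1) + c₃ * ‖j v‖ ^ 2)
    (c₄ c₅ : ℝ) (hc₅ : 0 ≤ c₅)
    (hgrow : ∀ u v : V,
      |A u v| ≤ c₄ + c₅ * (‖u‖ ^ r + ‖v‖ ^ (r + 1) + ‖j u‖ ^ 2 + ‖j v‖ ^ 2))
    (lam : ℝ) (hlam : max (c₃ / 2) 0 ≤ lam)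
    (x : H) (xs : ℕ → V) (hs : ℕ → H)
    (hrep : ∀ n : ℕ, 1 ≤ n → ∀ v : V, A (xs n) v = ⟪hs n, j v⟫)
    (hres : ∀ n : ℕ, 1 ≤ n →
      j (xs n) + (1 / (n : ℝ)) • (lam • j (xs n) - hs n) = x) :
    (∃ M : ℝ, ∀ n : ℕ, 1 ≤ n → ‖j (xs n)‖ ≤ M) ∧
      Tendsto
        (fun n : ℕ => ⨆ v : {v : V // ‖v‖ ≤ 1}, |⟪x - j (xs n), j (v : V)⟫|)
        atTop (nhds 0) := by
  have hr1 : (0:ℝ) < r + 1 := by linarith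
  obtain ⟨M, hMdef⟩ : ∃ M : ℝ, M = ‖x‖ + |c₁| / 2 + 1 := ⟨_, rfl⟩
  have hM0 : 0 ≤ M := by rw [hMdef]; positivity
  -- difference formula
  have hdiff : ∀ n : ℕ, 1 ≤ n → ∀ v : V,
      ⟪x - j (xs n), j v⟫ = (1/(n:ℝ)) * (lam * ⟪j (xs n), j v⟫ - A (xs n) v) := by
    intro n hn v
    have hx : x - j (xs n) = (1/(n:ℝ)) • (lam • j (xs n) - hs n) := by
      rw [sub_eq_iff_eq_add, ← hres n hn]; abel
    rw [hx, real_inner_smul_left, inner_sub_left, real_inner_smul_left, hrep n hn v]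
  -- key estimate
  have key : ∀ n : ℕ, 1 ≤ n →
      ‖j (xs n)‖ ^ 2 + (1/(n:ℝ)) * ((c₂/2) * ‖xs n‖ ^ (r+1) - c₁/2)
        ≤ ‖x‖ * ‖j (xs n)‖ := by
    intro n hn
    have hn0 : (0:ℝ) < n := by exact_mod_cast hn
    have h1 := hdiff n hn (xs n)
    rw [inner_sub_left, real_inner_self_eq_norm_sq] at h1
    have h2 : (c₂/2) * ‖xs n‖ ^ (r+1) - c₁/2
        ≤ lam * ‖j (xs n)‖ ^ 2 - A (xs n) (xs n) := by
      have hco := hcoer (xs n)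
      have hl : c₃ / 2 ≤ lam := le_trans (le_max_left _ _) hlam
      nlinarith [sq_nonneg ‖j (xs n)‖]
    have h3 : ⟪x, j (xs n)⟫ ≤ ‖x‖ * ‖j (xs n)‖ := real_inner_le_norm x _
    have h4 : (1/(n:ℝ)) * ((c₂/2) * ‖xs n‖ ^ (r+1) - c₁/2)
        ≤ (1/(n:ℝ)) * (lam * ‖j (xs n)‖ ^ 2 - A (xs n) (xs n)) :=
      mul_le_mul_of_nonneg_left h2 (by positivity)
    linarith
  -- boundedness in H
  have hbound : ∀ n : ℕ, 1 ≤ n → ‖j (xs n)‖ ≤ M := by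
    intro n hn
    have hn0 : (0:ℝ) < n := by exact_mod_cast hn
    have hn1 : 1/(n:ℝ) ≤ 1 := by
      rw [div_le_one hn0]; exact_mod_cast hn
    have hk := key n hn
    have hN : 0 ≤ ‖xs n‖ ^ (r+1) := Real.rpow_nonneg (norm_nonneg _) _
    have hu0 : (0:ℝ) < 1/(n:ℝ) := by positivity
    have h5 : ‖j (xs n)‖ ^ 2 ≤ ‖x‖ * ‖j (xs n)‖ + |c₁|/2 := by
      have hc : (1/(n:ℝ)) * (c₁/2) ≤ |c₁|/2 := by
        nlinarith [le_abs_self c₁, abs_nonneg c₁]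
      nlinarith [mul_nonneg hu0.le (mul_nonneg (by linarith : (0:ℝ) ≤ c₂/2) hN)]
    by_contra hcon
    push_neg at hcon
    have ht0 : 0 ≤ ‖j (xs n)‖ := norm_nonneg _
    have ht1 : (1:ℝ) < ‖j (xs n)‖ := by
      have h1 := norm_nonneg x
      have h2 := abs_nonneg c₁
      have : (1:ℝ) ≤ M := by rw [hMdef]; linarith
      linarith
    nlinarith [norm_nonneg x, abs_nonneg c₁,
      mul_lt_mul_of_pos_right hcon (by linarith : (0:ℝ) < ‖j (xs n)‖),
      mul_nonneg (by positivity : (0:ℝ) ≤ |c₁|/2) (by linarith : (0:ℝ) ≤ ‖j (xs n)‖ - 1)]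
  -- growth of the V-norm
  obtain ⟨K, hKdef⟩ : ∃ K : ℝ, K = (2/c₂) * (‖x‖ * M + |c₁|/2) + 1 := ⟨_, rfl⟩
  have hK0 : 0 < K := by
    have h1 : 0 ≤ (2/c₂) * (‖x‖ * M + |c₁|/2) :=
      mul_nonneg (le_of_lt (div_pos (by norm_num) hc₂))
        (by positivity)
    rw [hKdef]; linarith
  have hgrowN : ∀ n : ℕ, 1 ≤ n → ‖xs n‖ ^ (r+1) ≤ K * n := by
    intro n hn
    have hn0 : (0:ℝ) < n := by exact_mod_cast hn
    have hn1 : (1:ℝ) ≤ n := by exact_mod_cast hn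
    have hk := key n hn
    have ht := hbound n hn
    have ht0 : 0 ≤ ‖j (xs n)‖ := norm_nonneg _
    have h7a : (1/(n:ℝ)) * ((c₂/2) * ‖xs n‖ ^ (r+1) - c₁/2) ≤ ‖x‖ * M := by
      nlinarith [sq_nonneg ‖j (xs n)‖, mul_le_mul_of_nonneg_left ht (norm_nonneg x)]
    have h7 : (c₂/2) * ‖xs n‖ ^ (r+1) - c₁/2 ≤ (‖x‖ * M) * n := by
      have h := mul_le_mul_of_nonneg_left h7a hn0.le
      have h' : (n:ℝ) * ((1/(n:ℝ)) * ((c₂/2) * ‖xs n‖ ^ (r+1) - c₁/2))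
          = (c₂/2) * ‖xs n‖ ^ (r+1) - c₁/2 := by
        rw [← mul_assoc, mul_one_div_cancel hn0.ne', one_mul]
      rw [h'] at h
      linarith [h]
    have h6 : (c₂/2) * ‖xs n‖ ^ (r+1) ≤ (‖x‖ * M + |c₁|/2) * n := by
      nlinarith [le_abs_self c₁, abs_nonneg c₁]
    have h8 : ‖xs n‖ ^ (r+1) ≤ (2/c₂) * ((‖x‖ * M + |c₁|/2) * n) := by
      have h9 := mul_le_mul_of_nonneg_left h6 (le_of_lt (div_pos (by norm_num : (0:ℝ) < 2) hc₂))
      have h10 : (2/c₂) * ((c₂/2) * ‖xs n‖ ^ (r+1)) = ‖xs n‖ ^ (r+1) := by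
        rw [← mul_assoc]
        have : (2/c₂) * (c₂/2) = 1 := by field_simp
        rw [this, one_mul]
      rw [h10] at h9
      exact h9
    calc ‖xs n‖ ^ (r+1) ≤ (2/c₂) * ((‖x‖ * M + |c₁|/2) * n) := h8
      _ = ((2/c₂) * (‖x‖ * M + |c₁|/2)) * n := (mul_assoc _ _ _).symm
      _ ≤ ((2/c₂) * (‖x‖ * M + |c₁|/2)) * n + n := le_add_of_nonneg_right hn0.le
      _ = K * n := by rw [hKdef]; ring
  obtain ⟨s', hs'def⟩ : ∃ s' : ℝ, s' = r / (r+1) := ⟨_, rfl⟩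
  have hs'0 : 0 ≤ s' := by rw [hs'def]; exact div_nonneg hr.le hr1.le
  have hs'1 : s' < 1 := by rw [hs'def, div_lt_one hr1]; linarith
  have hrpow : ∀ n : ℕ, 1 ≤ n → ‖xs n‖ ^ r ≤ K ^ s' * (n:ℝ) ^ s' := by
    intro n hn
    have hn0 : (0:ℝ) < n := by exact_mod_cast hn
    have h1 : ‖xs n‖ ^ r = (‖xs n‖ ^ (r+1)) ^ s' := by
      rw [← Real.rpow_mul (norm_nonneg _), hs'def]
      congr 1
      field_simp
    calc ‖xs n‖ ^ r = (‖xs n‖ ^ (r+1)) ^ s' := h1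
      _ ≤ (K * n) ^ s' :=
          Real.rpow_le_rpow (Real.rpow_nonneg (norm_nonneg _) _) (hgrowN n hn) hs'0
      _ = K ^ s' * (n:ℝ) ^ s' := Real.mul_rpow hK0.le hn0.le
  -- main estimate tested against the unit ball
  obtain ⟨C₁, hC₁def⟩ : ∃ C : ℝ,
      C = |lam| * (M * ‖j‖) + |c₄| + c₅ * (1 + M^2 + ‖j‖^2) := ⟨_, rfl⟩
  obtain ⟨C₂, hC₂def⟩ : ∃ C : ℝ, C = c₅ * K ^ s' := ⟨_, rfl⟩
  have hmain : ∀ n : ℕ, 1 ≤ n → ∀ v : V, ‖v‖ ≤ 1 →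
      |⟪x - j (xs n), j v⟫| ≤ (1/(n:ℝ)) * (C₁ + C₂ * (n:ℝ) ^ s') := by
    intro n hn v hv
    have hn0 : (0:ℝ) < n := by exact_mod_cast hn
    rw [hdiff n hn v, abs_mul, abs_of_pos (by positivity : (0:ℝ) < 1/(n:ℝ))]
    refine mul_le_mul_of_nonneg_left ?_ (by positivity)
    have hjv : ‖j v‖ ≤ ‖j‖ :=
      le_trans (j.le_opNorm v) (by simpa using mul_le_mul_of_nonneg_left hv (norm_nonneg j))
    have hinner : |⟪j (xs n), j v⟫| ≤ M * ‖j‖ :=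
      le_trans (abs_real_inner_le_norm _ _)
        (mul_le_mul (hbound n hn) hjv (norm_nonneg _) hM0)
    have hA : |A (xs n) v| ≤ |c₄| + c₅ * (K ^ s' * (n:ℝ) ^ s' + 1 + M^2 + ‖j‖^2) := by
      refine le_trans (hgrow (xs n) v) ?_
      have h1 : ‖v‖ ^ (r+1) ≤ 1 := Real.rpow_le_one (norm_nonneg _) hv (le_of_lt hr1)
      have h2 : ‖j (xs n)‖ ^ 2 ≤ M^2 := pow_le_pow_left₀ (norm_nonneg _) (hbound n hn) 2
      have h3 : ‖j v‖ ^ 2 ≤ ‖j‖ ^ 2 := pow_le_pow_left₀ (norm_nonneg _) hjv 2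
      have h4 := hrpow n hn
      have h5 := le_abs_self c₄
      have h6 : ‖xs n‖ ^ r + ‖v‖ ^ (r+1) + ‖j (xs n)‖ ^ 2 + ‖j v‖ ^ 2
          ≤ K ^ s' * (n:ℝ) ^ s' + 1 + M^2 + ‖j‖^2 := by linarith
      exact add_le_add h5 (mul_le_mul_of_nonneg_left h6 hc₅)
    calc |lam * ⟪j (xs n), j v⟫ - A (xs n) v|
        ≤ |lam * ⟪j (xs n), j v⟫| + |A (xs n) v| := by
          rw [sub_eq_add_neg]
          exact (abs_add_le _ _).trans (by rw [abs_neg])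
      _ = |lam| * |⟪j (xs n), j v⟫| + |A (xs n) v| := by rw [abs_mul]
      _ ≤ |lam| * (M * ‖j‖) + (|c₄| + c₅ * (K ^ s' * (n:ℝ) ^ s' + 1 + M^2 + ‖j‖^2)) := by
          gcongr
      _ = C₁ + C₂ * (n:ℝ) ^ s' := by rw [hC₁def, hC₂def]; ring
  haveI : Nonempty {v : V // ‖v‖ ≤ 1} := ⟨⟨0, by simp⟩⟩
  refine ⟨⟨M, hbound⟩, ?_⟩
  have hSub : ∀ n : ℕ, 1 ≤ n →
      (⨆ v : {v : V // ‖v‖ ≤ 1}, |⟪x - j (xs n), j (v:V)⟫|)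
        ≤ (1/(n:ℝ)) * (C₁ + C₂ * (n:ℝ) ^ s') :=
    fun n hn => ciSup_le fun v => hmain n hn v v.2
  have hSlb : ∀ n : ℕ, 1 ≤ n →
      0 ≤ ⨆ v : {v : V // ‖v‖ ≤ 1}, |⟪x - j (xs n), j (v:V)⟫| := by
    intro n hn
    have hbdd : BddAbove (Set.range fun v : {v : V // ‖v‖ ≤ 1} =>
        |⟪x - j (xs n), j (v:V)⟫|) := by
      refine ⟨(1/(n:ℝ)) * (C₁ + C₂ * (n:ℝ) ^ s'), ?_⟩
      rintro y ⟨v, rfl⟩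
      exact hmain n hn v v.2
    have h := le_ciSup hbdd (⟨0, by simp⟩ : {v : V // ‖v‖ ≤ 1})
    simpa using h
  have hg : Tendsto (fun n : ℕ => (1/(n:ℝ)) * (C₁ + C₂ * (n:ℝ) ^ s')) atTop (nhds 0) := by
    have h1 : Tendsto (fun n : ℕ => C₁ / (n:ℝ)) atTop (nhds 0) :=
      tendsto_const_div_atTop_nhds_zero_nat C₁
    have h2 : Tendsto (fun n : ℕ => (n:ℝ) ^ (s' - 1)) atTop (nhds 0) := by
      have h3 : Tendsto (fun y : ℝ => y ^ (s' - 1)) atTop (nhds 0) := by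
        have := tendsto_rpow_neg_atTop (by linarith : (0:ℝ) < 1 - s')
        simpa [neg_sub] using this
      exact h3.comp tendsto_natCast_atTop_atTop
    have h4 : Tendsto (fun n : ℕ => C₁/(n:ℝ) + C₂ * (n:ℝ) ^ (s' - 1)) atTop (nhds 0) := by
      simpa using h1.add (h2.const_mul C₂)
    refine Tendsto.congr' ?_ h4
    filter_upwards [eventually_ge_atTop 1] with n hn
    have hn0 : (0:ℝ) < n := by exact_mod_cast hn
    rw [Real.rpow_sub hn0, Real.rpow_one]
    field_simp
  refine tendsto_of_tendsto_of_tendsto_of_le_of_le' tendsto_const_nhds hg ?_ ?_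
  · filter_upwards [eventually_ge_atTop 1] with n hn using hSlb n hn
  · filter_upwards [eventually_ge_atTop 1] with n hn using hSub n hn
end
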